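/- Let ρ be a density matrix, M a POVM on finite Ω with estimator β̌ : Ω → ℝ^q, and define the mean β = ∑ₓ β̌(x) tr(ρ M(x)) (assumed local unbiasedness), the influence operators X_s = ∑ₓ (β̌_s(x) − β_s) M(x), the error matrix Σ = ∑ₓ (β̌(x)−β)(β̌(x)−β)ᵀ tr(ρ M(x)), and V(X)_{st} = tr(ρ (X_s X_t + X_t X_s)/2). Then Σ ⪰ V(X). -/

import Mathlib

open Matrix ComplexOrder

lemma trace_nonneg' {n : Type*} [Fintype n] [DecidableEq n] {A : Matrix n n ℂ} (hA : A.PosSemidef) :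
    0 ≤ A.trace := by
  rw [Matrix.trace]
  apply Finset.sum_nonneg
  intro i _
  have := hA.dotProduct_mulVec_nonneg (Pi.single i 1)
  simpa [Matrix.mulVec_single, dotProduct, Pi.single_apply, apply_ite, Finset.sum_ite_eq] using this

lemma trace_mul_nonneg' {n : Type*} [Fintype n] [DecidableEq n] {P Q : Matrix n n ℂ}
    (hP : P.PosSemidef) (hQ : Q.PosSemidef) : 0 ≤ (P * Q).trace := by
  open scoped MatrixOrder in obtain ⟨B, rfl⟩ := CStarAlgebra.nonneg_iff_eq_star_mul_self.mp hQ.nonneg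
  rw [← mul_assoc, trace_mul_cycle]
  exact trace_nonneg' (hP.mul_mul_conjTranspose_same B)
/-- Holevo's matrix CRB with the symmetrized covariance: `Sig ⪰ V(X)` for the
influence operators of a locally unbiased measurement. -/
theorem error_matrix_ge_sym_covariance {Ω n q : Type*}
    [Fintype Ω] [Fintype n] [DecidableEq n] [Fintype q] [DecidableEq q]
    (ρ : Matrix n n ℂ) (hρ : ρ.PosSemidef) (hρtr : ρ.trace = 1)
    (M : Ω → Matrix n n ℂ) (hpos : ∀ x, (M x).PosSemidef) (hsum : ∑ x, M x = 1)
    (betaHat : Ω → q → ℝ) (beta : q → ℝ)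
    (hmean : ∀ s, beta s = ∑ x, betaHat x s * (ρ * M x).trace.re)
    (X : q → Matrix n n ℂ)
    (hX : ∀ s, X s = ∑ x, ((betaHat x s - beta s : ℝ) : ℂ) • M x)
    (Sig : Matrix q q ℝ)
    (hSig : ∀ s t, Sig s t = ∑ x, (betaHat x s - beta s) * (betaHat x t - beta t)
        * (ρ * M x).trace.re)
    (V : Matrix q q ℝ)
    (hV : ∀ s t, V s t = ((ρ * ((X s * X t + X t * X s) : Matrix n n ℂ)).trace.re) / 2) :
    (Sig - V).PosSemidef := by
  rw [posSemidef_iff_dotProduct_mulVec]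
  constructor
  · -- symmetry
    ext i j
    simp only [conjTranspose_apply, Matrix.sub_apply, star_trivial]
    rw [hSig, hSig, hV, hV]
    have h1 : ∑ x, (betaHat x j - beta j) * (betaHat x i - beta i) * (ρ * M x).trace.re
        = ∑ x, (betaHat x i - beta i) * (betaHat x j - beta j) * (ρ * M x).trace.re :=
      Finset.sum_congr rfl fun x _ => by ring
    rw [h1, add_comm]
  · intro a
    set g : Ω → ℝ := fun x => ∑ s, a s * (betaHat x s - beta s) with hg
    set A : Matrix n n ℂ := ∑ x, (g x : ℂ) • M x with hAdef
    have hAX : A = ∑ s, (a s : ℂ) • X s := by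
      rw [hAdef]
      simp only [hX, Finset.smul_sum, smul_smul]
      rw [Finset.sum_comm]
      refine Finset.sum_congr rfl fun x _ => ?_
      rw [← Finset.sum_smul]
      congr 1
      rw [hg]
      push_cast
      ring
    have hAh : Aᴴ = A := by
      rw [hAdef, conjTranspose_sum]
      refine Finset.sum_congr rfl fun x _ => ?_
      rw [conjTranspose_smul, (hpos x).1.eq]
      simp [Complex.star_def, Complex.conj_ofReal]
    have key : ∑ x, (((g x : ℂ) • (1 : Matrix n n ℂ) - A) * ρ * ((g x : ℂ) • 1 - A) * M x)
        = (∑ x, ((g x : ℂ))^2 • (ρ * M x)) - ρ * (A * A) := by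
      have expand : ∀ x : Ω, ((g x : ℂ) • (1 : Matrix n n ℂ) - A) * ρ * ((g x : ℂ) • 1 - A) * M x
          = (g x : ℂ)^2 • (ρ * M x) - (g x : ℂ) • (ρ * (A * M x))
            - (g x : ℂ) • (A * (ρ * M x)) + A * ρ * (A * M x) := by
        intro x
        simp only [sub_mul, mul_sub, smul_mul_assoc, mul_smul_comm, one_mul, mul_one,
          smul_smul, smul_sub, sq, mul_assoc]
        abel
      have e1 : ∑ x, (g x : ℂ) • (ρ * (A * M x)) = ρ * (A * A) := by
        calc ∑ x, (g x : ℂ) • (ρ * (A * M x)) = ∑ x, ρ * A * ((g x : ℂ) • M x) := by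
              refine Finset.sum_congr rfl fun x _ => ?_
              rw [mul_smul_comm, mul_assoc]
          _ = ρ * A * ∑ x, (g x : ℂ) • M x := by rw [← Finset.mul_sum]
          _ = ρ * (A * A) := by rw [← hAdef, mul_assoc]
      have e2 : ∑ x, (g x : ℂ) • (A * (ρ * M x)) = A * ρ * A := by
        calc ∑ x, (g x : ℂ) • (A * (ρ * M x)) = ∑ x, A * ρ * ((g x : ℂ) • M x) := by
              refine Finset.sum_congr rfl fun x _ => ?_
              rw [mul_smul_comm, mul_assoc]
          _ = A * ρ * ∑ x, (g x : ℂ) • M x := by rw [← Finset.mul_sum]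
          _ = A * ρ * A := by rw [← hAdef]
      have e3 : ∑ x, A * ρ * (A * M x) = A * ρ * A := by
        calc ∑ x, A * ρ * (A * M x) = ∑ x, A * ρ * A * M x := by
              refine Finset.sum_congr rfl fun x _ => ?_
              simp only [mul_assoc]
          _ = A * ρ * A * ∑ x, M x := by rw [← Finset.mul_sum]
          _ = A * ρ * A := by rw [hsum, mul_one]
      calc ∑ x, (((g x : ℂ) • (1 : Matrix n n ℂ) - A) * ρ * ((g x : ℂ) • 1 - A) * M x)
          = ∑ x, ((g x : ℂ)^2 • (ρ * M x) - (g x : ℂ) • (ρ * (A * M x))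
            - (g x : ℂ) • (A * (ρ * M x)) + A * ρ * (A * M x)) :=
            Finset.sum_congr rfl fun x _ => expand x
        _ = ((∑ x, (g x : ℂ)^2 • (ρ * M x)) - ∑ x, (g x : ℂ) • (ρ * (A * M x)))
            - (∑ x, (g x : ℂ) • (A * (ρ * M x))) + ∑ x, A * ρ * (A * M x) := by
            rw [Finset.sum_add_distrib, Finset.sum_sub_distrib, Finset.sum_sub_distrib]
        _ = (∑ x, ((g x : ℂ))^2 • (ρ * M x)) - ρ * (A * A) := by
            rw [e1, e2, e3]; abel
    have pos : 0 ≤ ((∑ x, ((g x : ℂ))^2 • (ρ * M x)) - ρ * (A * A)).trace := by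
      rw [← key, trace_sum]
      apply Finset.sum_nonneg
      intro x _
      have hBh : ((g x : ℂ) • (1 : Matrix n n ℂ) - A)ᴴ = (g x : ℂ) • 1 - A := by
        simp [conjTranspose_smul, hAh, Complex.star_def]
      have hBPSD : (((g x : ℂ) • (1 : Matrix n n ℂ) - A) * ρ * ((g x : ℂ) • 1 - A)).PosSemidef := by
        nth_rewrite 2 [← hBh]
        exact hρ.mul_mul_conjTranspose_same _
      exact trace_mul_nonneg' hBPSD (hpos x)
    have main : (ρ * (A * A)).trace.re ≤ ∑ x, (g x) ^ 2 * (ρ * M x).trace.re := by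
      rw [trace_sub, trace_sum] at pos
      have := (Complex.le_def.mp pos).1
      simp only [Complex.zero_re, Complex.sub_re, Complex.add_re] at this
      have hre : (∑ x, (((g x : ℂ))^2 • (ρ * M x)).trace).re = ∑ x, (g x) ^ 2 * (ρ * M x).trace.re := by
        rw [Complex.re_sum]
        refine Finset.sum_congr rfl fun x _ => ?_
        rw [trace_smul, smul_eq_mul, ← Complex.ofReal_pow]
        simp [Complex.mul_re, ← Complex.ofReal_pow]
      linarith [hre ▸ this]
    have hQS : a ⬝ᵥ Sig *ᵥ a = ∑ x, (g x) ^ 2 * (ρ * M x).trace.re := by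
      calc a ⬝ᵥ Sig *ᵥ a
          = ∑ s, ∑ t, ∑ x, a s * ((betaHat x s - beta s) * (betaHat x t - beta t)
              * (ρ * M x).trace.re * a t) := by
            simp only [dotProduct, mulVec, hSig, Finset.sum_mul, Finset.mul_sum]
        _ = ∑ s, ∑ x, ∑ t, a s * ((betaHat x s - beta s) * (betaHat x t - beta t)
              * (ρ * M x).trace.re * a t) :=
            Finset.sum_congr rfl fun s _ => Finset.sum_comm
        _ = ∑ x, ∑ s, ∑ t, a s * ((betaHat x s - beta s) * (betaHat x t - beta t)
              * (ρ * M x).trace.re * a t) := Finset.sum_comm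
        _ = ∑ x, (g x) ^ 2 * (ρ * M x).trace.re := by
            refine Finset.sum_congr rfl fun x _ => ?_
            rw [hg, sq, Finset.sum_mul_sum, Finset.sum_mul]
            refine Finset.sum_congr rfl fun s _ => ?_
            rw [Finset.sum_mul]
            exact Finset.sum_congr rfl fun t _ => by ring
    have hQV : a ⬝ᵥ V *ᵥ a = (ρ * (A * A)).trace.re := by
      have htr : (ρ * (A * A)).trace
          = ∑ s, ∑ t, ((a s : ℂ) * (a t : ℂ)) * (ρ * (X s * X t)).trace := by
        rw [hAX, Finset.sum_mul_sum, Finset.mul_sum, trace_sum]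
        refine Finset.sum_congr rfl fun s _ => ?_
        rw [Finset.mul_sum, trace_sum]
        refine Finset.sum_congr rfl fun t _ => ?_
        rw [smul_mul_smul_comm, mul_smul_comm, trace_smul, smul_eq_mul]
      have hre : (ρ * (A * A)).trace.re
          = ∑ s, ∑ t, a s * a t * (ρ * (X s * X t)).trace.re := by
        rw [htr, Complex.re_sum]
        refine Finset.sum_congr rfl fun s _ => ?_
        rw [Complex.re_sum]
        refine Finset.sum_congr rfl fun t _ => ?_
        rw [← Complex.ofReal_mul]
        simp [Complex.mul_re]
      have swap : ∑ s, ∑ t, a s * a t * (ρ * (X t * X s)).trace.re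
          = ∑ s, ∑ t, a s * a t * (ρ * (X s * X t)).trace.re := by
        rw [Finset.sum_comm]
        refine Finset.sum_congr rfl fun s _ => Finset.sum_congr rfl fun t _ => by ring
      calc a ⬝ᵥ V *ᵥ a
          = ∑ s, ∑ t, a s * (V s t * a t) := by
            simp only [dotProduct, mulVec, Finset.mul_sum]
        _ = ∑ s, ∑ t, (a s * a t * (ρ * (X s * X t)).trace.re
              + a s * a t * (ρ * (X t * X s)).trace.re) / 2 := by
            refine Finset.sum_congr rfl fun s _ => Finset.sum_congr rfl fun t _ => ?_
            rw [hV, mul_add, trace_add, Complex.add_re]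
            ring
        _ = ((∑ s, ∑ t, a s * a t * (ρ * (X s * X t)).trace.re)
              + ∑ s, ∑ t, a s * a t * (ρ * (X t * X s)).trace.re) / 2 := by
            symm
            rw [← Finset.sum_add_distrib, Finset.sum_div]
            refine Finset.sum_congr rfl fun s _ => ?_
            rw [← Finset.sum_add_distrib, Finset.sum_div]
        _ = (ρ * (A * A)).trace.re := by rw [swap, hre]; ring
    have : star a ⬝ᵥ (Sig - V) *ᵥ a = a ⬝ᵥ Sig *ᵥ a - a ⬝ᵥ V *ᵥ a := by
      rw [star_trivial, sub_mulVec, dotProduct_sub]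
    rw [this, hQS, hQV]
    linarith
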